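/- Let ρ be a permutation of {1,…,n} with 312-height vector (h_1,…,h_n). Suppose that for some index i the path ψ_{(3,1,2)}(ρ) has a jump of depth d ≥ 1 at position i, i.e. d = h_i − h_{i+1} − 1 ≥ 1, which is followed immediately by l ≥ 1 consecutive down-steps, i.e. h_{i+j+1} = h_{i+j} − 1 for all 1 ≤ j ≤ l−1 (with i+l ≤ n). Let r be the largest index with r ≤ i such that ρ_r is a left-to-right maximum (the preceding left-to-right maximum), and let K = {k : i < k ≤ n, ρ_{i+1} < ρ_k < ρ_i}. Then |K| = d, every k ∈ K satisfies k > i + l, and for every 1 ≤ j ≤ l and every k ∈ K the triple (r, i+j, k) is an occurrence of the pattern (3,1,2) in ρ (i.e., ρ_r > ρ_k > ρ_{i+j}); this yields exactly d·l occurrences of (3,1,2) of this type. -/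
import Mathlib

def IsLRMax {n : ℕ} (ρ : Equiv.Perm (Fin n)) (i : Fin n) : Prop :=
  ∀ j, j < i → ρ j < ρ i

def height312 {n : ℕ} (ρ : Equiv.Perm (Fin n)) (i : Fin n) : ℕ :=
  (Finset.univ.filter (fun k => i < k ∧ ρ k < ρ i)).card

lemma height_le_succ {n : ℕ} (ρ : Equiv.Perm (Fin n)) (p : Fin n) (hp : (p:ℕ)+1 < n)
    (hlt : ρ p < ρ ⟨(p:ℕ)+1, hp⟩) : height312 ρ p ≤ height312 ρ ⟨(p:ℕ)+1, hp⟩ := by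
  apply Finset.card_le_card
  intro k hk
  simp only [Finset.mem_filter, Finset.mem_univ, true_and] at hk ⊢
  obtain ⟨h1, h2⟩ := hk
  have hk1 : k ≠ ⟨(p:ℕ)+1, hp⟩ := by
    intro he
    rw [he] at h2
    exact absurd (h2.trans hlt) (lt_irrefl _)
  refine ⟨?_, h2.trans hlt⟩
  have hv : (p:ℕ) < (k:ℕ) := h1
  have hne : (k:ℕ) ≠ (p:ℕ)+1 := fun he => hk1 (Fin.ext he)
  rw [Fin.lt_def]
  simp only [Fin.val_mk]
  omega

lemma height_split {n : ℕ} (ρ : Equiv.Perm (Fin n)) (p : Fin n) (hp : (p:ℕ)+1 < n)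
    (hlt : ρ ⟨(p:ℕ)+1, hp⟩ < ρ p) :
    height312 ρ p = height312 ρ ⟨(p:ℕ)+1, hp⟩ + 1 +
      (Finset.univ.filter (fun k => p < k ∧ ρ ⟨(p:ℕ)+1, hp⟩ < ρ k ∧ ρ k < ρ p)).card := by
  have hpp' : p < (⟨(p:ℕ)+1, hp⟩ : Fin n) := by
    rw [Fin.lt_def]; simp
  have hA : (Finset.univ.filter (fun k => p < k ∧ ρ k < ρ p)) =
      insert (⟨(p:ℕ)+1, hp⟩ : Fin n)
        ((Finset.univ.filter (fun k => (⟨(p:ℕ)+1, hp⟩ : Fin n) < k ∧ ρ k < ρ ⟨(p:ℕ)+1, hp⟩)) ∪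
        (Finset.univ.filter (fun k => p < k ∧ ρ ⟨(p:ℕ)+1, hp⟩ < ρ k ∧ ρ k < ρ p))) := by
    ext k
    simp only [Finset.mem_insert, Finset.mem_union, Finset.mem_filter, Finset.mem_univ, true_and]
    constructor
    · rintro ⟨h1, h2⟩
      by_cases hkp : k = (⟨(p:ℕ)+1, hp⟩ : Fin n)
      · exact Or.inl hkp
      · right
        have hpk : (⟨(p:ℕ)+1, hp⟩ : Fin n) < k := by
          rw [Fin.lt_def] at h1 ⊢
          have hne : (k:ℕ) ≠ (p:ℕ)+1 := fun he => hkp (Fin.ext he)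
          simp only [Fin.val_mk]
          omega
        rcases lt_trichotomy (ρ k) (ρ ⟨(p:ℕ)+1, hp⟩) with h'|h'|h'
        · exact Or.inl ⟨hpk, h'⟩
        · exact absurd (ρ.injective h') hkp
        · exact Or.inr ⟨h1, h', h2⟩
    · rintro (h | ⟨h1, h2⟩ | ⟨h1, h2, h3⟩)
      · subst h; exact ⟨hpp', hlt⟩
      · exact ⟨hpp'.trans h1, h2.trans hlt⟩
      · exact ⟨h1, h3⟩
  have hnotmem : (⟨(p:ℕ)+1, hp⟩ : Fin n) ∉
      ((Finset.univ.filter (fun k => (⟨(p:ℕ)+1, hp⟩ : Fin n) < k ∧ ρ k < ρ ⟨(p:ℕ)+1, hp⟩)) ∪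
       (Finset.univ.filter (fun k => p < k ∧ ρ ⟨(p:ℕ)+1, hp⟩ < ρ k ∧ ρ k < ρ p))) := by
    simp [lt_irrefl]
  have hdisj : Disjoint
      (Finset.univ.filter (fun k => (⟨(p:ℕ)+1, hp⟩ : Fin n) < k ∧ ρ k < ρ ⟨(p:ℕ)+1, hp⟩))
      (Finset.univ.filter (fun k => p < k ∧ ρ ⟨(p:ℕ)+1, hp⟩ < ρ k ∧ ρ k < ρ p)) := by
    rw [Finset.disjoint_left]
    intro a ha hb
    simp only [Finset.mem_filter, Finset.mem_univ, true_and] at ha hb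
    exact absurd (ha.2.trans hb.2.1) (lt_irrefl _)
  unfold height312
  rw [hA, Finset.card_insert_of_notMem hnotmem, Finset.card_union_of_disjoint hdisj]
  omega

theorem jump_gives_312_occurrences {n : ℕ} (ρ : Equiv.Perm (Fin n)) (d l : ℕ)
    (hd : 1 ≤ d) (hl : 1 ≤ l) (i : Fin n) (hil : (i : ℕ) + l < n)
    (h : ℕ → ℕ) (hh : ∀ p : Fin n, h (p : ℕ) = height312 ρ p)
    (hjump : h ((i : ℕ) + 1) + 1 + d = h (i : ℕ))
    (hdown : ∀ j, 1 ≤ j → j ≤ l - 1 → h ((i : ℕ) + j + 1) + 1 = h ((i : ℕ) + j))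
    (r : Fin n) (hr : r ≤ i) (hrmax : IsLRMax ρ r)
    (hrlast : ∀ p, r < p → p ≤ i → ¬ IsLRMax ρ p)
    (K : Finset (Fin n))
    (hK : K = Finset.univ.filter (fun k =>
      i < k ∧ ρ ⟨(i : ℕ) + 1, by omega⟩ < ρ k ∧ ρ k < ρ i)) :
    K.card = d ∧
    (∀ k ∈ K, (i : ℕ) + l < (k : ℕ)) ∧
    (∀ j, ∀ _hj1 : 1 ≤ j, ∀ _hj2 : j ≤ l, ∀ k ∈ K,
      r < (⟨(i : ℕ) + j, by omega⟩ : Fin n) ∧ (⟨(i : ℕ) + j, by omega⟩ : Fin n) < k ∧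
      ρ (⟨(i : ℕ) + j, by omega⟩ : Fin n) < ρ k ∧ ρ k < ρ r) ∧
    (Finset.univ.filter (fun t : Fin n × Fin n =>
      i < t.1 ∧ (t.1 : ℕ) ≤ (i : ℕ) + l ∧ t.2 ∈ K ∧
      r < t.1 ∧ t.1 < t.2 ∧ ρ t.1 < ρ t.2 ∧ ρ t.2 < ρ r)).card = d * l := by
  have h1n : (i:ℕ)+1 < n := by omega
  -- basic equations
  have e1 : h (i:ℕ) = height312 ρ i := hh i
  have e2 : h ((i:ℕ)+1) = height312 ρ ⟨(i:ℕ)+1, h1n⟩ := hh ⟨(i:ℕ)+1, h1n⟩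
  -- descent at i
  have hlt1 : ρ ⟨(i:ℕ)+1, h1n⟩ < ρ i := by
    rcases lt_trichotomy (ρ ⟨(i:ℕ)+1, h1n⟩) (ρ i) with h'|h'|h'
    · exact h'
    · exfalso
      have := ρ.injective h'
      have : ((⟨(i:ℕ)+1, h1n⟩ : Fin n) : ℕ) = (i:ℕ) := by rw [this]
      simp at this
    · have := height_le_succ ρ i h1n h'
      omega
  -- |K| = d
  have hsplit := height_split ρ i h1n hlt1
  have hKcard : K.card = (Finset.univ.filter
      (fun k => i < k ∧ ρ ⟨(i:ℕ)+1, h1n⟩ < ρ k ∧ ρ k < ρ i)).card := by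
    rw [hK]
  have hKd : K.card = d := by omega
  -- decreasing chain
  have hdec : ∀ j (_ : 1 ≤ j) (hj2 : j ≤ l - 1),
      ρ ⟨(i:ℕ)+j+1, by omega⟩ < ρ ⟨(i:ℕ)+j, by omega⟩ := by
    intro j hj1 hj2
    have hjn : (i:ℕ)+j+1 < n := by omega
    have e3 : h ((i:ℕ)+j) = height312 ρ ⟨(i:ℕ)+j, by omega⟩ := hh ⟨(i:ℕ)+j, by omega⟩
    have e4 : h ((i:ℕ)+j+1) = height312 ρ ⟨(i:ℕ)+j+1, hjn⟩ := hh ⟨(i:ℕ)+j+1, hjn⟩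
    have hdj := hdown j hj1 hj2
    rcases lt_trichotomy (ρ (⟨(i:ℕ)+j+1, hjn⟩ : Fin n)) (ρ (⟨(i:ℕ)+j, by omega⟩ : Fin n)) with h'|h'|h'
    · exact h'
    · exfalso
      have heq := ρ.injective h'
      have : ((⟨(i:ℕ)+j+1, hjn⟩ : Fin n) : ℕ) = (i:ℕ)+j := by rw [heq]
      simp at this
    · have := height_le_succ ρ ⟨(i:ℕ)+j, by omega⟩ hjn h'
      simp only [Fin.val_mk] at this
      omega
  have hchain : ∀ j (_ : 1 ≤ j) (hj2 : j ≤ l),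
      ρ (⟨(i:ℕ)+j, by omega⟩ : Fin n) ≤ ρ ⟨(i:ℕ)+1, h1n⟩ := by
    intro j
    induction j with
    | zero => omega
    | succ m ih =>
      intro _ hj2
      rcases Nat.eq_zero_or_pos m with hm | hm
      · subst hm; exact le_refl _
      · have hml : m ≤ l - 1 := by omega
        exact le_trans (le_of_lt (hdec m hm hml)) (ih hm (by omega))
  -- every k in K is beyond i + l
  have hKbig : ∀ k ∈ K, (i:ℕ) + l < (k:ℕ) := by
    intro k hk
    rw [hK] at hk
    simp only [Finset.mem_filter, Finset.mem_univ, true_and] at hk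
    obtain ⟨hk1, hk2, hk3⟩ := hk
    by_contra hle
    push_neg at hle
    have hik : (i:ℕ) < (k:ℕ) := hk1
    set j := (k:ℕ) - (i:ℕ) with hj
    have hjl : 1 ≤ j ∧ j ≤ l := by omega
    have hkeq : k = ⟨(i:ℕ)+j, by omega⟩ := by
      apply Fin.ext; simp; omega
    have := hchain j hjl.1 hjl.2
    rw [← hkeq] at this
    exact absurd (lt_of_lt_of_le hk2 this) (lt_irrefl _)
  -- everything left of i is at most ρ r
  have hrtop : ∀ p : Fin n, p ≤ i → ρ p ≤ ρ r := by
    have key : ∀ m, ∀ p : Fin n, (p:ℕ) = m → p ≤ i → ρ p ≤ ρ r := by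
      intro m
      induction m using Nat.strong_induction_on with
      | _ m ih =>
        intro p hpm hpi
        rcases lt_trichotomy p r with h'|h'|h'
        · exact le_of_lt (hrmax p h')
        · rw [h']
        · have hnl := hrlast p h' hpi
          unfold IsLRMax at hnl
          push_neg at hnl
          obtain ⟨j, hj1, hj2⟩ := hnl
          have hjp : j ≠ p := ne_of_lt hj1
          have hlt : ρ p < ρ j := by
            rcases lt_or_eq_of_le (hj2) with h''|h''
            · exact h''
            · exact absurd (ρ.injective h''.symm) hjp
          have hji : j ≤ i := le_trans (le_of_lt hj1) hpi
          have := ih (j:ℕ) (by rw [← hpm]; exact hj1) j rfl hji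
          exact le_trans (le_of_lt hlt) this
    intro p hpi
    exact key (p:ℕ) p rfl hpi
  -- occurrence claim
  have hocc : ∀ j, ∀ _hj1 : 1 ≤ j, ∀ _hj2 : j ≤ l, ∀ k ∈ K,
      r < (⟨(i : ℕ) + j, by omega⟩ : Fin n) ∧ (⟨(i : ℕ) + j, by omega⟩ : Fin n) < k ∧
      ρ (⟨(i : ℕ) + j, by omega⟩ : Fin n) < ρ k ∧ ρ k < ρ r := by
    intro j hj1 hj2 k hk
    have hkbig := hKbig k hk
    rw [hK] at hk
    simp only [Finset.mem_filter, Finset.mem_univ, true_and] at hk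
    obtain ⟨hk1, hk2, hk3⟩ := hk
    refine ⟨?_, ?_, ?_, ?_⟩
    · rw [Fin.lt_def]
      have : (r:ℕ) ≤ (i:ℕ) := hr
      simp only [Fin.val_mk]
      omega
    · rw [Fin.lt_def]
      simp only [Fin.val_mk]
      omega
    · exact lt_of_le_of_lt (hchain j hj1 hj2) hk2
    · exact lt_of_lt_of_le hk3 (hrtop i (le_refl i))
  refine ⟨hKd, hKbig, hocc, ?_⟩
  -- counting
  have hset : (Finset.univ.filter (fun t : Fin n × Fin n =>
      i < t.1 ∧ (t.1 : ℕ) ≤ (i : ℕ) + l ∧ t.2 ∈ K ∧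
      r < t.1 ∧ t.1 < t.2 ∧ ρ t.1 < ρ t.2 ∧ ρ t.2 < ρ r)) =
      (Finset.Ioc i ⟨(i:ℕ)+l, hil⟩) ×ˢ K := by
    ext t
    simp only [Finset.mem_filter, Finset.mem_univ, true_and, Finset.mem_product,
      Finset.mem_Ioc]
    constructor
    · rintro ⟨h1, h2, h3, _⟩
      exact ⟨⟨h1, by rw [Fin.le_def]; simpa using h2⟩, h3⟩
    · rintro ⟨⟨h1, h2⟩, h3⟩
      have h2' : (t.1:ℕ) ≤ (i:ℕ)+l := by
        rw [Fin.le_def] at h2; simpa using h2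
      have hik : (i:ℕ) < (t.1:ℕ) := h1
      set j := (t.1:ℕ) - (i:ℕ) with hj
      have hjl : 1 ≤ j ∧ j ≤ l := by omega
      have hteq : t.1 = ⟨(i:ℕ)+j, by omega⟩ := by
        apply Fin.ext; simp; omega
      obtain ⟨o1, o2, o3, o4⟩ := hocc j hjl.1 hjl.2 t.2 h3
      rw [← hteq] at o1 o2 o3
      exact ⟨h1, h2', h3, o1, o2, o3, o4⟩
  rw [hset, Finset.card_product, Fin.card_Ioc]
  simp only [Fin.val_mk, Nat.add_sub_cancel_left]
  rw [hKd, Nat.mul_comm]
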